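/- Let R be an m×m matrix, written in blocks R = [[R₁₁, R₁₂],[R₂₁, R₂₂]] conformal with j = diag(I_{m1}, -I_{m2}), satisfying R* j R ≥ j. If φ is an m2×m1 matrix with [I φ*] j [I; φ] ≥ 0 (i.e., φ*φ ≤ I_{m1}), then R₁₁ + R₁₂ φ is invertible. -/

import Mathlib

open Matrix
open scoped ComplexOrder

theorem stmt_6 (m₁ m₂ : ℕ)
    (j R : Matrix (Fin m₁ ⊕ Fin m₂) (Fin m₁ ⊕ Fin m₂) ℂ)
    (hj : j = Matrix.fromBlocks 1 0 0 (-1))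
    (hR : (Rᴴ * j * R - j).PosSemidef)
    (φ : Matrix (Fin m₂) (Fin m₁) ℂ)
    (hφ : ((Matrix.fromRows (1 : Matrix (Fin m₁) (Fin m₁) ℂ) φ)ᴴ * j *
      Matrix.fromRows (1 : Matrix (Fin m₁) (Fin m₁) ℂ) φ).PosSemidef) :
    (R.toBlocks₁₁ + R.toBlocks₁₂ * φ).det ≠ 0 := by
  rw [Ne, ← Matrix.exists_mulVec_eq_zero_iff]
  rintro ⟨x, hx, hAx⟩
  set F : Matrix (Fin m₁ ⊕ Fin m₂) (Fin m₁) ℂ :=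
    Matrix.fromRows (1 : Matrix (Fin m₁) (Fin m₁) ℂ) φ with hFdef
  set v : Fin m₁ ⊕ Fin m₂ → ℂ := Sum.elim x (φ *ᵥ x) with hv
  have hF : F *ᵥ x = v := by
    rw [hFdef, Matrix.fromRows_mulVec, Matrix.one_mulVec]
  set w := R *ᵥ v with hw
  -- first block of w vanishes
  have hw1 : w ∘ Sum.inl = 0 := by
    have hRb : R = Matrix.fromBlocks R.toBlocks₁₁ R.toBlocks₁₂ R.toBlocks₂₁ R.toBlocks₂₂ :=
      (Matrix.fromBlocks_toBlocks R).symm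
    funext i
    have : w = Sum.elim (R.toBlocks₁₁ *ᵥ x + R.toBlocks₁₂ *ᵥ (φ *ᵥ x))
        (R.toBlocks₂₁ *ᵥ x + R.toBlocks₂₂ *ᵥ (φ *ᵥ x)) := by
      rw [hw, hRb, Matrix.fromBlocks_mulVec]
      rfl
    have h2 : w (Sum.inl i) = ((R.toBlocks₁₁ + R.toBlocks₁₂ * φ) *ᵥ x) i := by
      rw [this]
      simp [Matrix.add_mulVec, Matrix.mulVec_mulVec]
    simpa [hAx] using h2
  -- quadratic form identities
  have key : ∀ (M : Matrix (Fin m₁ ⊕ Fin m₂) (Fin m₁ ⊕ Fin m₂) ℂ)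
      (u : Fin m₁ ⊕ Fin m₂ → ℂ) (S : Matrix (Fin m₁ ⊕ Fin m₂) (Fin m₁ ⊕ Fin m₂) ℂ),
      star u ⬝ᵥ (Sᴴ * M * S) *ᵥ u = star (S *ᵥ u) ⬝ᵥ M *ᵥ (S *ᵥ u) := by
    intro M u S
    rw [← Matrix.mulVec_mulVec, ← Matrix.mulVec_mulVec, Matrix.dotProduct_mulVec,
      ← Matrix.star_mulVec]
  have keyF : ∀ (M : Matrix (Fin m₁ ⊕ Fin m₂) (Fin m₁ ⊕ Fin m₂) ℂ) (u : Fin m₁ → ℂ),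
      star u ⬝ᵥ (Fᴴ * M * F) *ᵥ u = star (F *ᵥ u) ⬝ᵥ M *ᵥ (F *ᵥ u) := by
    intro M u
    rw [← Matrix.mulVec_mulVec, ← Matrix.mulVec_mulVec, Matrix.dotProduct_mulVec,
      ← Matrix.star_mulVec]
  have hvj : (0 : ℂ) ≤ star v ⬝ᵥ j *ᵥ v := by
    have := hφ.dotProduct_mulVec_nonneg x
    rwa [keyF j x, hF] at this
  have hRq : (0 : ℂ) ≤ star w ⬝ᵥ j *ᵥ w - star v ⬝ᵥ j *ᵥ v := by
    have := hR.dotProduct_mulVec_nonneg v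
    rwa [Matrix.sub_mulVec, dotProduct_sub, key j v R, ← hw] at this
  -- star w j w = - ‖w₂‖²
  have hjw : j *ᵥ w = Sum.elim (w ∘ Sum.inl) (-(w ∘ Sum.inr)) := by
    rw [hj, Matrix.fromBlocks_mulVec]
    simp [Matrix.neg_mulVec]
  have hwj_eq : star w ⬝ᵥ j *ᵥ w = -(star (w ∘ Sum.inr) ⬝ᵥ (w ∘ Sum.inr)) := by
    rw [hjw]
    simp only [dotProduct, Fintype.sum_sum_type, Sum.elim_inl, Sum.elim_inr,
      Pi.star_apply, Function.comp_apply, Pi.neg_apply]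
    have : ∀ i : Fin m₁, star (w (Sum.inl i)) * w (Sum.inl i) = 0 := by
      intro i
      have : w (Sum.inl i) = 0 := congrFun hw1 i
      simp [this]
    rw [Finset.sum_congr rfl (fun i _ => this i)]
    simp [mul_neg, Finset.sum_neg_distrib]
  have hwj_nonpos : star w ⬝ᵥ j *ᵥ w ≤ 0 := by
    rw [hwj_eq]
    exact neg_nonpos.mpr (dotProduct_star_self_nonneg _)
  -- conclude everything is zero
  have hX : star w ⬝ᵥ j *ᵥ w = 0 :=
    le_antisymm hwj_nonpos (le_trans hvj (sub_nonneg.mp hRq))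
  have hY : star v ⬝ᵥ j *ᵥ v = 0 := by
    have h1 : star v ⬝ᵥ j *ᵥ v ≤ 0 := by
      have := sub_nonneg.mp hRq; rw [hX] at this; exact le_trans this (le_refl 0)
    exact le_antisymm h1 hvj
  have hw2 : w ∘ Sum.inr = 0 := by
    have : star (w ∘ Sum.inr) ⬝ᵥ (w ∘ Sum.inr) = 0 := by
      rw [hwj_eq] at hX
      exact neg_eq_zero.mp hX
    exact dotProduct_star_self_eq_zero.mp this
  have hw0 : w = 0 := by
    funext i
    cases i with
    | inl i => exact congrFun hw1 i
    | inr i => exact congrFun hw2 i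
  have hq0 : star v ⬝ᵥ (Rᴴ * j * R - j) *ᵥ v = 0 := by
    rw [Matrix.sub_mulVec, dotProduct_sub, key j v R, ← hw, hX, hY, sub_zero]
  have hker : (Rᴴ * j * R - j) *ᵥ v = 0 := (hR.dotProduct_mulVec_zero_iff v).mp hq0
  have hjv : j *ᵥ v = 0 := by
    have : (Rᴴ * j * R) *ᵥ v - j *ᵥ v = 0 := by
      rwa [Matrix.sub_mulVec] at hker
    have h2 : (Rᴴ * j * R) *ᵥ v = 0 := by
      rw [← Matrix.mulVec_mulVec, ← Matrix.mulVec_mulVec, ← hw, hw0]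
      simp
    rw [h2, zero_sub, neg_eq_zero] at this
    exact this
  have hx0 : x = 0 := by
    have hjv' : Sum.elim (v ∘ Sum.inl) (-(v ∘ Sum.inr)) = 0 := by
      rw [← hjv, hj, Matrix.fromBlocks_mulVec]
      simp [Matrix.neg_mulVec]
    funext i
    have := congrFun hjv' (Sum.inl i)
    simpa [hv] using this
  exact hx hx0
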